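/- Let σ ∈ AOP(n,m) and let F(σ) = [b_{j,k}] be the associated Bott matrix. For i ∈ [m-1], the matrix obtained by conjugating F(σ) by the permutation matrix of the simple transposition s_i = (i,i+1) is again a Bott matrix of BS type (i.e., lies in B(n,m)) if and only if i and i+1 are not neighbors in σ. Here j and k are neighbors in σ if they lie in the same block of some ordered partition σ_a or in consecutive blocks of the same σ_a. -/

import Mathlib

/-- An ordered partition: a list of (nonempty, pairwise disjoint) finite sets. -/
abbrev OP := List (Finset ℕ)

/-- An assembly of ordered partitions: a list of ordered partitions. -/
abbrev Assembly := List OP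

/-- The union of the blocks of an ordered partition. -/
def Uop (op : OP) : Finset ℕ := op.foldr (· ∪ ·) ∅

/-- `σ` is an assembly of ordered partitions of `[m]` with bound `n`. -/
def IsAOP (n m : ℕ) (σ : Assembly) : Prop :=
  (∀ op ∈ σ, op ≠ [] ∧ ∀ b ∈ op, b.Nonempty) ∧
  σ.flatten.Pairwise (fun s t => Disjoint s t) ∧
  σ.flatten.foldr (· ∪ ·) ∅ = Finset.Icc 1 m ∧
  σ.Pairwise (fun o₁ o₂ => (Uop o₁).min < (Uop o₂).min) ∧
  (σ.map List.length).sum + (σ.length - 1) ≤ n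

/-- `x` and `y` lie in a common block of some ordered partition of `σ`. -/
def sameBlock (σ : Assembly) (x y : ℕ) : Prop :=
  ∃ op ∈ σ, ∃ b ∈ op, x ∈ b ∧ y ∈ b

/-- `x` and `y` lie in consecutive blocks of some ordered partition of `σ`. -/
def adjBlock (σ : Assembly) (x y : ℕ) : Prop :=
  ∃ op ∈ σ, ∃ t : ℕ, t + 1 < op.length ∧
    ((x ∈ op[t]! ∧ y ∈ op[t + 1]!) ∨ (y ∈ op[t]! ∧ x ∈ op[t + 1]!))

/-- `x` and `y` are neighbors in `σ`. -/
def Neighbor (σ : Assembly) (x y : ℕ) : Prop := sameBlock σ x y ∨ adjBlock σ x y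

open Classical in
/-- The Bott matrix `F(σ)` associated to an assembly `σ` of ordered partitions of `[m]`
(the element of `[m]` corresponding to the index `j : Fin m` is `j + 1`). -/
noncomputable def FMat (m : ℕ) (σ : Assembly) : Matrix (Fin m) (Fin m) ℤ :=
  fun j k =>
    if j = k then -1
    else if k < j then
      (if sameBlock σ ((j : ℕ) + 1) ((k : ℕ) + 1) then -2
       else if adjBlock σ ((j : ℕ) + 1) ((k : ℕ) + 1) then 1 else 0)
    else 0

/-- The set of indices (1-based) on which the sequence `i` takes the value `v`. -/
def fiberSet (m : ℕ) (i : Fin m → ℤ) (v : ℤ) : Finset ℕ :=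
  (Finset.univ.filter (fun k => i k = v)).image (fun k : Fin m => (k : ℕ) + 1)

/-- Group a sorted list of integers into maximal runs of consecutive integers. -/
def groupRuns : List ℤ → List (List ℤ)
  | [] => []
  | a :: rest =>
    match groupRuns rest with
    | [] => [[a]]
    | [] :: gs => [a] :: [] :: gs
    | (b :: g) :: gs =>
        if a + 1 = b then (a :: b :: g) :: gs else [a] :: (b :: g) :: gs

/-- The map `α` sending a sequence to its assembly of ordered partitions. -/
def alpha (m : ℕ) (i : Fin m → ℤ) : Assembly :=
  (groupRuns ((Finset.image i Finset.univ).sort (· ≤ ·))).map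
    (fun run => run.map (fiberSet m i))

/-- The equivalence `∼` on assemblies: same length, and each constituent ordered
partition agrees up to reversal. -/
def SimRel (σ τ : Assembly) : Prop :=
  List.Forall₂ (fun s t => t = s ∨ t = s.reverse) σ τ

/-- The Bott matrix of BS type associated to a sequence `i`. -/
def bottMatrix (m : ℕ) (i : Fin m → ℤ) : Matrix (Fin m) (Fin m) ℤ :=
  fun j k =>
    if j = k then -1
    else if k < j then
      (if i j = i k then -2 else if |i j - i k| = 1 then 1 else 0)
    else 0

/-- The set `B(n,m)` of Bott matrices of BS type arising from sequences in `[n]^m`. -/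
def BSet (n m : ℕ) : Set (Matrix (Fin m) (Fin m) ℤ) :=
  {B | ∃ i : Fin m → ℤ, (∀ t, i t ∈ Finset.Icc (1 : ℤ) n) ∧ B = bottMatrix m i}

/-- `B(n,m)` as the set of matrices of the form `F(σ)` for `σ ∈ AOP(n,m)`. -/
def BSetF (n m : ℕ) : Set (Matrix (Fin m) (Fin m) ℤ) :=
  {B | ∃ σ : Assembly, IsAOP n m σ ∧ FMat m σ = B}

lemma mem_foldr_union {l : List (Finset ℕ)} {x : ℕ} :
    x ∈ l.foldr (· ∪ ·) ∅ ↔ ∃ s ∈ l, x ∈ s := by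
  induction l with
  | nil => simp
  | cons a l ih => simp [ih]

lemma mem_Uop {op : OP} {x : ℕ} : x ∈ Uop op ↔ ∃ b ∈ op, x ∈ b := mem_foldr_union

lemma sameBlock_symm {σ : Assembly} {x y : ℕ} (h : sameBlock σ x y) : sameBlock σ y x := by
  obtain ⟨op, h1, b, h2, h3, h4⟩ := h; exact ⟨op, h1, b, h2, h4, h3⟩

lemma adjBlock_symm {σ : Assembly} {x y : ℕ} (h : adjBlock σ x y) : adjBlock σ y x := by
  obtain ⟨op, h1, t, h2, h3⟩ := h; exact ⟨op, h1, t, h2, h3.symm⟩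

/-- Apply a relabeling to every block of an assembly. -/
def mapA (f : ℕ → ℕ) (σ : Assembly) : Assembly := σ.map (List.map (Finset.image f))

lemma mem_image_equiv' {τ : Equiv.Perm ℕ} {b : Finset ℕ} {x : ℕ} :
    x ∈ b.image τ ↔ τ.symm x ∈ b := by
  constructor
  · intro h; obtain ⟨a, ha, rfl⟩ := Finset.mem_image.1 h; simpa using ha
  · intro h; exact Finset.mem_image.2 ⟨τ.symm x, h, τ.apply_symm_apply x⟩

lemma sameBlock_mapA {τ : Equiv.Perm ℕ} {σ : Assembly} {x y : ℕ} :
    sameBlock (mapA τ σ) x y ↔ sameBlock σ (τ.symm x) (τ.symm y) := by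
  constructor
  · rintro ⟨op', hop', b', hb', hx, hy⟩
    obtain ⟨op, hop, rfl⟩ := List.mem_map.1 hop'
    obtain ⟨b, hb, rfl⟩ := List.mem_map.1 hb'
    exact ⟨op, hop, b, hb, mem_image_equiv'.1 hx, mem_image_equiv'.1 hy⟩
  · rintro ⟨op, hop, b, hb, hx, hy⟩
    exact ⟨op.map (Finset.image τ), List.mem_map_of_mem hop, b.image τ,
      List.mem_map_of_mem hb, mem_image_equiv'.2 hx, mem_image_equiv'.2 hy⟩

lemma getElem!_map_op (f : ℕ → ℕ) (op : OP) (t : ℕ) (ht : t < op.length) :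
    (op.map (Finset.image f))[t]! = (op[t]!).image f := by
  rw [getElem!_pos _ t (by simpa using ht), getElem!_pos op t ht, List.getElem_map]

lemma adjBlock_mapA {τ : Equiv.Perm ℕ} {σ : Assembly} {x y : ℕ} :
    adjBlock (mapA τ σ) x y ↔ adjBlock σ (τ.symm x) (τ.symm y) := by
  constructor
  · rintro ⟨op', hop', t, ht, hxy⟩
    obtain ⟨op, hop, rfl⟩ := List.mem_map.1 hop'
    rw [List.length_map] at ht
    refine ⟨op, hop, t, ht, ?_⟩
    rw [getElem!_map_op τ op t (by omega), getElem!_map_op τ op (t+1) ht] at hxy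
    rcases hxy with ⟨h1, h2⟩ | ⟨h1, h2⟩
    · exact Or.inl ⟨mem_image_equiv'.1 h1, mem_image_equiv'.1 h2⟩
    · exact Or.inr ⟨mem_image_equiv'.1 h1, mem_image_equiv'.1 h2⟩
  · rintro ⟨op, hop, t, ht, hxy⟩
    refine ⟨op.map (Finset.image τ), List.mem_map_of_mem hop, t, by simpa using ht, ?_⟩
    rw [getElem!_map_op τ op t (by omega), getElem!_map_op τ op (t+1) ht]
    rcases hxy with ⟨h1, h2⟩ | ⟨h1, h2⟩
    · exact Or.inl ⟨mem_image_equiv'.2 h1, mem_image_equiv'.2 h2⟩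
    · exact Or.inr ⟨mem_image_equiv'.2 h1, mem_image_equiv'.2 h2⟩

lemma sameBlock_perm {σ₁ σ₂ : Assembly} (hp : σ₁.Perm σ₂) {x y : ℕ} :
    sameBlock σ₁ x y ↔ sameBlock σ₂ x y := by
  simp [sameBlock, hp.mem_iff]

lemma adjBlock_perm {σ₁ σ₂ : Assembly} (hp : σ₁.Perm σ₂) {x y : ℕ} :
    adjBlock σ₁ x y ↔ adjBlock σ₂ x y := by
  simp [adjBlock, hp.mem_iff]

lemma FMat_diag (m : ℕ) (σ : Assembly) (a : Fin m) : FMat m σ a a = -1 := by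
  simp [FMat]

lemma FMat_upper (m : ℕ) (σ : Assembly) (a b : Fin m) (hne : a ≠ b) (hnlt : ¬ b < a) :
    FMat m σ a b = 0 := by
  simp [FMat, hne, hnlt]

open Classical in
lemma FMat_lower (m : ℕ) (σ : Assembly) (a b : Fin m) (hlt : b < a) :
    FMat m σ a b =
      (if sameBlock σ ((a : ℕ) + 1) ((b : ℕ) + 1) then -2
       else if adjBlock σ ((a : ℕ) + 1) ((b : ℕ) + 1) then 1 else 0) := by
  have hne : a ≠ b := hlt.ne'
  simp [FMat, hne, hlt]
lemma exists_aop (n m : ℕ) (σ : Assembly) (h : IsAOP n m σ) (p : ℕ)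
    (hp1 : 1 ≤ p) (hpm : p + 1 ≤ m) :
    ∃ σ'' : Assembly, IsAOP n m σ'' ∧
      (∀ x y, sameBlock σ'' x y ↔ sameBlock σ (Equiv.swap p (p+1) x) (Equiv.swap p (p+1) y)) ∧
      (∀ x y, adjBlock σ'' x y ↔ adjBlock σ (Equiv.swap p (p+1) x) (Equiv.swap p (p+1) y)) := by
  obtain ⟨h1, h2, h3, h4, h5⟩ := h
  set τ : Equiv.Perm ℕ := Equiv.swap p (p+1) with hτ
  have hτsymm : τ.symm = τ := Equiv.symm_swap p (p+1)
  set σ' : Assembly := mapA τ σ with hσ'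
  set r : OP → OP → Prop := fun o₁ o₂ => (Uop o₁).min ≤ (Uop o₂).min with hr
  haveI : DecidableRel r := fun a b => inferInstanceAs (Decidable (_ ≤ _))
  haveI : IsTotal OP r := ⟨fun a b => le_total _ _⟩
  haveI : IsTrans OP r := ⟨fun a b c hab hbc => le_trans hab hbc⟩
  set σ'' : Assembly := List.insertionSort r σ' with hσ''
  have hperm : σ''.Perm σ' := List.perm_insertionSort r σ'
  have hmem : ∀ op ∈ σ'', ∃ op₀ ∈ σ, op = op₀.map (Finset.image τ) := by
    intro op hop
    have := hperm.mem_iff.1 hop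
    obtain ⟨op₀, h₀, rfl⟩ := List.mem_map.1 this
    exact ⟨op₀, h₀, rfl⟩
  -- condition 1
  have c1 : ∀ op ∈ σ'', op ≠ [] ∧ ∀ b ∈ op, b.Nonempty := by
    intro op hop
    obtain ⟨op₀, h₀, rfl⟩ := hmem op hop
    constructor
    · simp [(h1 op₀ h₀).1]
    · intro b hb
      obtain ⟨b₀, hb₀, rfl⟩ := List.mem_map.1 hb
      exact ((h1 op₀ h₀).2 b₀ hb₀).image _
  -- condition 2
  have hflat' : σ'.flatten = σ.flatten.map (Finset.image τ) := by
    rw [hσ', mapA, List.map_flatten]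
  have h2' : σ'.flatten.Pairwise (fun s t => Disjoint s t) := by
    rw [hflat', List.pairwise_map]
    exact h2.imp (fun hd => (Finset.disjoint_image τ.injective).2 hd)
  have c2 : σ''.flatten.Pairwise (fun s t => Disjoint s t) :=
    (List.Perm.pairwise_iff (fun hd => hd.symm) hperm.flatten).2 h2'
  -- condition 3
  have hτIcc : ∀ x, τ x ∈ Finset.Icc 1 m ↔ x ∈ Finset.Icc 1 m := by
    intro x
    rcases eq_or_ne x p with rfl | hx1
    · rw [hτ, Equiv.swap_apply_left]; simp [Finset.mem_Icc]; omega
    rcases eq_or_ne x (p+1) with rfl | hx2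
    · rw [hτ, Equiv.swap_apply_right]; simp [Finset.mem_Icc]; omega
    · rw [hτ, Equiv.swap_apply_of_ne_of_ne hx1 hx2]
  have c3 : σ''.flatten.foldr (· ∪ ·) ∅ = Finset.Icc 1 m := by
    ext x
    rw [mem_foldr_union, ← hτIcc x, ← h3, mem_foldr_union]
    constructor
    · rintro ⟨s, hs, hxs⟩
      have hs' := hperm.flatten.mem_iff.1 hs
      rw [hflat'] at hs'
      obtain ⟨s₀, hs₀, rfl⟩ := List.mem_map.1 hs'
      refine ⟨s₀, hs₀, ?_⟩
      have := mem_image_equiv'.1 hxs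
      rwa [hτsymm] at this
    · rintro ⟨s₀, hs₀, hxs⟩
      refine ⟨s₀.image τ, ?_, ?_⟩
      · rw [hperm.flatten.mem_iff, hflat']
        exact List.mem_map_of_mem hs₀
      · rw [mem_image_equiv', hτsymm]; exact hxs
  -- condition 4
  have hUopdisj : σ''.Pairwise (fun o₁ o₂ => Disjoint (Uop o₁) (Uop o₂)) := by
    have := (List.pairwise_flatten.1 c2).2
    exact this.imp (fun hbw => Finset.disjoint_left.2 (fun {x} ha hb => by
      obtain ⟨b1, hb1, ha1⟩ := mem_Uop.1 ha
      obtain ⟨b2, hb2, ha2⟩ := mem_Uop.1 hb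
      exact Finset.disjoint_left.1 (hbw b1 hb1 b2 hb2) ha1 ha2))
  have hUopne : ∀ op ∈ σ'', (Uop op).Nonempty := by
    intro op hop
    obtain ⟨hne, hbl⟩ := c1 op hop
    match op, hne with
    | b :: rest, _ =>
      obtain ⟨x, hx⟩ := hbl b (List.mem_cons_self)
      exact ⟨x, mem_Uop.2 ⟨b, List.mem_cons_self, hx⟩⟩
  have hne : σ''.Pairwise (fun o₁ o₂ => (Uop o₁).min ≠ (Uop o₂).min) := by
    refine hUopdisj.imp_of_mem (fun hm1 hm2 hd heq => ?_)
    rename_i o₁ o₂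
    have hs := hUopne o₁ hm1
    have ht := hUopne o₂ hm2
    obtain ⟨a, ha⟩ := Finset.min_of_nonempty hs
    have hb : (Uop o₂).min = ↑a := by rw [← heq]; exact ha
    exact Finset.disjoint_left.1 hd (Finset.mem_of_min ha) (Finset.mem_of_min hb)
  have c4 : σ''.Pairwise (fun o₁ o₂ => (Uop o₁).min < (Uop o₂).min) := by
    have hp : List.Pairwise r σ'' := List.pairwise_insertionSort r σ'
    exact (hp.and hne).imp (fun hab => lt_of_le_of_ne hab.1 hab.2)
  -- condition 5
  have c5 : (σ''.map List.length).sum + (σ''.length - 1) ≤ n := by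
    have hlen : σ''.length = σ.length := by
      rw [hperm.length_eq, hσ', mapA, List.length_map]
    have hsum : (σ''.map List.length).sum = (σ.map List.length).sum := by
      rw [(hperm.map List.length).sum_eq, hσ', mapA, List.map_map]
      congr 1
      apply List.map_congr_left
      intro op _
      simp
    rw [hlen, hsum]; exact h5
  refine ⟨σ'', ⟨c1, c2, c3, c4, c5⟩, ?_, ?_⟩
  · intro x y
    rw [sameBlock_perm hperm, hσ', sameBlock_mapA, hτsymm]
  · intro x y
    rw [adjBlock_perm hperm, hσ', adjBlock_mapA, hτsymm]
/-- for `σ ∈ AOP(n,m)` and `i ∈ [m-1]`, conjugating `F(σ)` by the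
permutation matrix of the simple transposition `s_i` yields a matrix in `B(n,m)`
if and only if `i` and `i+1` are not neighbors in `σ`. -/
theorem conj_mem_BSet_iff (n m : ℕ) (σ : Assembly) (h : IsAOP n m σ)
    (j : Fin m) (hj : (j : ℕ) + 1 < m) :
    (FMat m σ).submatrix (Equiv.swap j ⟨(j : ℕ) + 1, hj⟩)
        (Equiv.swap j ⟨(j : ℕ) + 1, hj⟩) ∈ BSetF n m ↔
      ¬ Neighbor σ ((j : ℕ) + 1) ((j : ℕ) + 2) := by
  set j' : Fin m := ⟨(j : ℕ) + 1, hj⟩ with hjdef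
  set e := Equiv.swap j j' with he
  have hvj' : (j' : ℕ) = (j : ℕ) + 1 := rfl
  have hltjj' : j < j' := by rw [Fin.lt_def, hvj']; omega
  have hnejj' : j ≠ j' := ne_of_lt hltjj'
  constructor
  · rintro ⟨σ₀, h₀, hF⟩ hnb
    have hv : FMat m σ₀ j j' = (FMat m σ).submatrix e e j j' := by rw [hF]
    rw [Matrix.submatrix_apply, he, Equiv.swap_apply_left, Equiv.swap_apply_right] at hv
    rw [FMat_upper m σ₀ j j' hnejj' (not_lt.2 hltjj'.le), FMat_lower m σ j' j hltjj'] at hv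
    rw [hvj'] at hv
    rcases hnb with hs | ha
    · rw [if_pos (show sameBlock σ ((j:ℕ)+1+1) ((j:ℕ)+1) from sameBlock_symm hs)] at hv
      norm_num at hv
    · by_cases hsb : sameBlock σ ((j:ℕ)+1+1) ((j:ℕ)+1)
      · rw [if_pos hsb] at hv; norm_num at hv
      · rw [if_neg hsb,
          if_pos (show adjBlock σ ((j:ℕ)+1+1) ((j:ℕ)+1) from adjBlock_symm ha)] at hv
        norm_num at hv
  · intro hnb
    obtain ⟨σ'', hAOP, hss, has⟩ := exists_aop n m σ h ((j : ℕ) + 1) (by omega) (by omega)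
    refine ⟨σ'', hAOP, ?_⟩
    have hnsb : ¬ sameBlock σ ((j:ℕ)+1+1) ((j:ℕ)+1) :=
      fun hsb => hnb (Or.inl (sameBlock_symm hsb))
    have hnab : ¬ adjBlock σ ((j:ℕ)+1+1) ((j:ℕ)+1) :=
      fun hab => hnb (Or.inr (adjBlock_symm hab))
    have hnsb'' : ¬ sameBlock σ'' ((j:ℕ)+1+1) ((j:ℕ)+1) := by
      intro hsb
      rw [hss, Equiv.swap_apply_right, Equiv.swap_apply_left] at hsb
      exact hnb (Or.inl hsb)
    have hnab'' : ¬ adjBlock σ'' ((j:ℕ)+1+1) ((j:ℕ)+1) := by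
      intro hab
      rw [has, Equiv.swap_apply_right, Equiv.swap_apply_left] at hab
      exact hnb (Or.inr hab)
    have key : ∀ a : Fin m,
        ((e a : ℕ)) + 1 = Equiv.swap ((j:ℕ)+1) ((j:ℕ)+1+1) ((a : ℕ) + 1) := by
      intro a
      rcases eq_or_ne a j with ha0 | h1
      · rw [ha0, he, Equiv.swap_apply_left, hvj', Equiv.swap_apply_left]
      rcases eq_or_ne a j' with ha0 | h2
      · rw [ha0, he, Equiv.swap_apply_right, Equiv.swap_apply_right]
      · have n1 : (a : ℕ) ≠ (j : ℕ) := fun hh => h1 (Fin.ext hh)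
        have n2 : (a : ℕ) ≠ (j : ℕ) + 1 := fun hh => h2 (Fin.ext (by rw [hvj']; exact hh))
        rw [he, Equiv.swap_apply_of_ne_of_ne h1 h2,
          Equiv.swap_apply_of_ne_of_ne (by omega) (by omega)]
    have F : ∀ x y : Fin m, x ≠ y → (x : ℕ) ≠ (y : ℕ) := fun x y hxy hh => hxy (Fin.ext hh)
    have korder : ∀ a b : Fin m, ¬(a = j ∧ b = j') → ¬(a = j' ∧ b = j) →
        (b < a ↔ e b < e a) := by
      have hvalj : ((e j : ℕ)) = (j : ℕ) + 1 := by rw [he, Equiv.swap_apply_left, hvj']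
      have hvalj' : ((e j' : ℕ)) = (j : ℕ) := by rw [he, Equiv.swap_apply_right]
      have hval : ∀ c : Fin m, c ≠ j → c ≠ j' → ((e c : ℕ)) = (c : ℕ) := by
        intro c h1 h2; rw [he, Equiv.swap_apply_of_ne_of_ne h1 h2]
      intro a b hn2 hn1
      rw [Fin.lt_def, Fin.lt_def]
      rcases eq_or_ne a j with ha0 | ha1
      · rcases eq_or_ne b j with hb0 | hb1
        · rw [ha0, hb0, hvalj]; omega
        rcases eq_or_ne b j' with hb0 | hb2
        · exact absurd ⟨ha0, hb0⟩ hn2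
        · have n1 : (b : ℕ) ≠ (j : ℕ) := F b j hb1
          have n2 : (b : ℕ) ≠ (j : ℕ) + 1 := by have := F b j' hb2; rwa [hvj'] at this
          rw [ha0, hvalj, hval b hb1 hb2]; omega
      rcases eq_or_ne a j' with ha0 | ha2
      · rcases eq_or_ne b j with hb0 | hb1
        · exact absurd ⟨ha0, hb0⟩ hn1
        rcases eq_or_ne b j' with hb0 | hb2
        · rw [ha0, hb0, hvalj']; omega
        · have n1 : (b : ℕ) ≠ (j : ℕ) := F b j hb1
          have n2 : (b : ℕ) ≠ (j : ℕ) + 1 := by have := F b j' hb2; rwa [hvj'] at this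
          rw [ha0, hvalj', hval b hb1 hb2, hvj']; omega
      · have na1 : (a : ℕ) ≠ (j : ℕ) := F a j ha1
        have na2 : (a : ℕ) ≠ (j : ℕ) + 1 := by have := F a j' ha2; rwa [hvj'] at this
        rcases eq_or_ne b j with hb0 | hb1
        · rw [hb0, hvalj, hval a ha1 ha2]; omega
        rcases eq_or_ne b j' with hb0 | hb2
        · rw [hb0, hvalj', hval a ha1 ha2, hvj']; omega
        · rw [hval a ha1 ha2, hval b hb1 hb2]
    funext a b
    rw [Matrix.submatrix_apply]
    by_cases hab : a = b
    · subst hab; rw [FMat_diag, FMat_diag]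
    by_cases hc1 : a = j' ∧ b = j
    · obtain ⟨ha, hb⟩ := hc1
      rw [ha, hb, he, Equiv.swap_apply_right, Equiv.swap_apply_left,
        FMat_lower m σ'' j' j hltjj', FMat_upper m σ j j' hnejj' (not_lt.2 hltjj'.le),
        hvj', if_neg hnsb'', if_neg hnab'']
    by_cases hc2 : a = j ∧ b = j'
    · obtain ⟨ha, hb⟩ := hc2
      rw [ha, hb, he, Equiv.swap_apply_left, Equiv.swap_apply_right,
        FMat_upper m σ'' j j' hnejj' (not_lt.2 hltjj'.le),
        FMat_lower m σ j' j hltjj', hvj', if_neg hnsb, if_neg hnab]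
    · have horder := korder a b hc2 hc1
      by_cases hba : b < a
      · have hba' := horder.1 hba
        rw [FMat_lower m σ'' a b hba, FMat_lower m σ (e a) (e b) hba']
        have e1 : sameBlock σ'' ((a:ℕ)+1) ((b:ℕ)+1) =
            sameBlock σ (Equiv.swap ((j:ℕ)+1) ((j:ℕ)+1+1) ((a:ℕ)+1))
              (Equiv.swap ((j:ℕ)+1) ((j:ℕ)+1+1) ((b:ℕ)+1)) := propext (hss _ _)
        have e2 : adjBlock σ'' ((a:ℕ)+1) ((b:ℕ)+1) =
            adjBlock σ (Equiv.swap ((j:ℕ)+1) ((j:ℕ)+1+1) ((a:ℕ)+1))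
              (Equiv.swap ((j:ℕ)+1) ((j:ℕ)+1+1) ((b:ℕ)+1)) := propext (has _ _)
        rw [e1, e2, ← key a, ← key b]
      · have hne' : e a ≠ e b := fun hh => hab (e.injective hh)
        rw [FMat_upper m σ'' a b hab hba,
          FMat_upper m σ (e a) (e b) hne' (fun hlt' => hba (horder.2 hlt'))]
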